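/- For the expected-cost functional C(c₁,...,c_q) = Σ_{i=1}^{q+1} ∫_{c_{i−1}}^{c_i} (c_i − t)p(t)dt (with c₀ = 0 and c_{q+1} = ℓ), if p is continuously differentiable and positive on (0,ℓ) and (c₁,...,c_q) with 0 < c₁ < ⋯ < c_q < ℓ is an interior minimizer, then for each i ∈ {1,...,q}, (F(c_i) − F(c_{i−1}))/p(c_i) = c_{i+1} − c_i, where F is the cdf of p and F(c₀) = 0, c_{q+1} = ℓ. -/

import Mathlib

/-- The extended checkpoint sequence: `ext q ℓ c 0 = 0`,
`ext q ℓ c i = c_(i-1)` for `1 ≤ i ≤ q`, and `ext q ℓ c (q+1) = ℓ`. -/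
def ext (q : ℕ) (ℓ : ℝ) (c : Fin q → ℝ) (j : ℕ) : ℝ :=
  if h : 0 < j ∧ j ≤ q then c ⟨j - 1, by omega⟩ else if j = 0 then 0 else ℓ

/-- The expected-cost functional
`C(c₁,...,c_q) = Σ_{i=1}^{q+1} ∫_{c_{i−1}}^{c_i} (c_i − t)p(t)dt`
(with `c₀ = 0` and `c_{q+1} = ℓ`). -/
noncomputable def cost (q : ℕ) (ℓ : ℝ) (p : ℝ → ℝ) (c : Fin q → ℝ) : ℝ :=
  ∑ i ∈ Finset.range (q + 1),
    ∫ t in ext q ℓ c i..ext q ℓ c (i + 1), (ext q ℓ c (i + 1) - t) * p t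

lemma ext_update (q : ℕ) (ℓ : ℝ) (c : Fin q → ℝ) (i : ℕ) (hi1 : 1 ≤ i) (hiq : i ≤ q)
    (x : ℝ) (j : ℕ) :
    ext q ℓ (Function.update c ⟨i - 1, by omega⟩ x) j = if j = i then x else ext q ℓ c j := by
  unfold ext
  by_cases h : 0 < j ∧ j ≤ q
  · rw [dif_pos h, dif_pos h, Function.update_apply]
    by_cases hji : j = i
    · rw [if_pos hji, if_pos (by subst hji; rfl)]
    · rw [if_neg hji, if_neg (fun hh => hji (by
        have := congrArg Fin.val hh
        simp at this
        omega))]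
  · have hj : j = 0 ∨ q < j := by
      by_contra hh; push_neg at hh; exact h ⟨by omega, by omega⟩
    rw [dif_neg h, dif_neg h, if_neg (by omega : ¬ j = i)]

/-- If `p` is continuously differentiable and positive on
`(0,ℓ)` and `(c₁,...,c_q)` with `0 < c₁ < ⋯ < c_q < ℓ` is an interior (local)
minimizer of the expected-cost functional, then for each `i ∈ {1,...,q}`,
`(F(c_i) − F(c_{i−1}))/p(c_i) = c_{i+1} − c_i`, where `F(x) = ∫₀^x p` is the
cdf of `p`, `F(c₀) = F(0) = 0` and `c_{q+1} = ℓ`. -/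
theorem stmt13 (q : ℕ) (hq : 0 < q) (ℓ : ℝ) (hℓ : 0 < ℓ)
    (p : ℝ → ℝ) (hp : ContDiff ℝ 1 p) (hpos : ∀ t ∈ Set.Ioo 0 ℓ, 0 < p t)
    (c : Fin q → ℝ) (hc : StrictMono c)
    (hc0 : 0 < c ⟨0, hq⟩) (hcq : c ⟨q - 1, by omega⟩ < ℓ)
    (hmin : IsLocalMin (cost q ℓ p) c) :
    ∀ i ∈ Finset.Icc 1 q,
      ((∫ s in (0 : ℝ)..ext q ℓ c i, p s) - ∫ s in (0 : ℝ)..ext q ℓ c (i - 1), p s) /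
          p (ext q ℓ c i)
        = ext q ℓ c (i + 1) - ext q ℓ c i := by
  intro i hi
  rw [Finset.mem_Icc] at hi
  obtain ⟨hi1, hiq⟩ := hi
  have hpc : Continuous p := hp.continuous
  set k : Fin q := ⟨i - 1, by omega⟩ with hk
  set x₀ : ℝ := c k with hx₀
  have hexti : ext q ℓ c i = x₀ := by
    unfold ext; rw [dif_pos ⟨by omega, hiq⟩]
  set a : ℝ := ext q ℓ c (i - 1) with ha
  set b : ℝ := ext q ℓ c (i + 1) with hb
  have hx0pos : 0 < x₀ := lt_of_lt_of_le hc0 (hc.monotone (by simp [Fin.le_def]))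
  have hx0lt : x₀ < ℓ := lt_of_le_of_lt (hc.monotone (by simp [Fin.le_def]; omega)) hcq
  have hppos : 0 < p x₀ := hpos x₀ ⟨hx0pos, hx0lt⟩
  set u : ℝ → Fin q → ℝ := fun x => Function.update c k x with hu
  have hu0 : u x₀ = c := Function.update_eq_self k c
  have hucont : Continuous u := continuous_pi fun j => by
    by_cases hj : j = k
    · subst hj; simpa [hu] using continuous_id'
    · simpa [hu, Function.update_apply, if_neg hj] using continuous_const
  have hgmin : IsLocalMin (fun x => cost q ℓ p (u x)) x₀ := by
    have h1 : IsMinFilter (cost q ℓ p) (nhds c) (u x₀) := by rw [hu0]; exact hmin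
    have htend : Filter.Tendsto u (nhds x₀) (nhds c) := by
      have := hucont.tendsto x₀; rwa [hu0] at this
    have h2 := IsMinFilter.comp_tendsto h1 htend
    exact h2
  have hext : ∀ x j, ext q ℓ (u x) j = if j = i then x else ext q ℓ c j := fun x j =>
    ext_update q ℓ c i hi1 hiq x j
  set d : ℕ → ℝ := fun j =>
    if j = i - 1 then (∫ t in a..x₀, p t) else if j = i then -((b - x₀) * p x₀) else 0 with hd
  have hint : ∀ (f : ℝ → ℝ), Continuous f → ∀ y z : ℝ,
      IntervalIntegrable f MeasureTheory.volume y z :=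
    fun f hf y z => hf.intervalIntegrable y z
  have hterm : ∀ j ∈ Finset.range (q + 1),
      HasDerivAt (fun x => ∫ t in ext q ℓ (u x) j..ext q ℓ (u x) (j + 1),
        (ext q ℓ (u x) (j + 1) - t) * p t) (d j) x₀ := by
    intro j hj
    rw [Finset.mem_range] at hj
    by_cases h1 : j = i - 1
    · -- term ∫_a^x (x - t) p t
      have hji : j + 1 = i := by omega
      have hne : ¬ j = i := by omega
      have heq : (fun x => ∫ t in ext q ℓ (u x) j..ext q ℓ (u x) (j + 1),
          (ext q ℓ (u x) (j + 1) - t) * p t)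
          = fun x => x * (∫ t in a..x, p t) - ∫ t in a..x, t * p t := by
        funext x
        rw [hext, hext, if_pos hji, if_neg hne, h1, ← ha]
        rw [← intervalIntegral.integral_const_mul, ← intervalIntegral.integral_sub
          (hint (fun t => x * p t) (continuous_const.mul hpc) a x)
          (hint (fun t => t * p t) (continuous_id'.mul hpc) a x)]
        congr 1; funext t; ring
      have hdv : d j = ∫ t in a..x₀, p t := by
        simp [hd, h1]
      rw [heq, hdv]
      have hG : HasDerivAt (fun x => ∫ t in a..x, p t) (p x₀) x₀ :=
        intervalIntegral.integral_hasDerivAt_right (hint p hpc a x₀)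
          (hpc.stronglyMeasurableAtFilter _ _) hpc.continuousAt
      have hH : HasDerivAt (fun x => ∫ t in a..x, t * p t) (x₀ * p x₀) x₀ :=
        intervalIntegral.integral_hasDerivAt_right (hint _ (continuous_id'.mul hpc) a x₀)
          ((continuous_id'.mul hpc).stronglyMeasurableAtFilter _ _)
          (continuous_id'.mul hpc).continuousAt
      have h := ((hasDerivAt_id x₀).mul hG).sub hH
      exact h.congr_deriv (by simp)
    by_cases h2 : j = i
    · -- term ∫_x^b (b - t) p t
      have hne' : ¬ j + 1 = i := by omega
      have heq : (fun x => ∫ t in ext q ℓ (u x) j..ext q ℓ (u x) (j + 1),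
          (ext q ℓ (u x) (j + 1) - t) * p t)
          = fun x => ∫ t in x..b, (b - t) * p t := by
        funext x
        rw [hext, hext, if_pos h2, if_neg hne', h2, ← hb]
      have hdv : d j = -((b - x₀) * p x₀) := by
        simp [hd, h2, show ¬ i = i - 1 from by omega]
      rw [heq, hdv]
      exact intervalIntegral.integral_hasDerivAt_left
        (hint _ ((continuous_const.sub continuous_id).mul hpc) x₀ b)
        (((continuous_const.sub continuous_id).mul hpc).stronglyMeasurableAtFilter _ _)
        ((continuous_const.sub continuous_id).mul hpc).continuousAt
    · -- constant term
      have hne' : ¬ j + 1 = i := by omega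
      have heq : (fun x => ∫ t in ext q ℓ (u x) j..ext q ℓ (u x) (j + 1),
          (ext q ℓ (u x) (j + 1) - t) * p t)
          = fun _ => ∫ t in ext q ℓ c j..ext q ℓ c (j + 1), (ext q ℓ c (j + 1) - t) * p t := by
        funext x
        rw [hext, hext, if_neg h2, if_neg hne']
      have hdv : d j = 0 := by
        simp [hd, h1, h2]
      rw [heq, hdv]
      exact hasDerivAt_const _ _
  have hsum : HasDerivAt (fun x => cost q ℓ p (u x))
      (∑ j ∈ Finset.range (q + 1), d j) x₀ := by
    have := HasDerivAt.fun_sum hterm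
    exact this
  have hdsum : ∑ j ∈ Finset.range (q + 1), d j = (∫ t in a..x₀, p t) - (b - x₀) * p x₀ := by
    rw [← Finset.sum_subset (s₁ := {i - 1, i}) (by
      intro j hj
      simp only [Finset.mem_insert, Finset.mem_singleton] at hj
      rw [Finset.mem_range]; omega)
      (by
        intro j _ hj
        simp only [Finset.mem_insert, Finset.mem_singleton] at hj
        push_neg at hj
        simp [hd, hj.1, hj.2])]
    rw [Finset.sum_pair (by omega : i - 1 ≠ i)]
    have e1 : d (i - 1) = ∫ t in a..x₀, p t := by
      simp [hd]
    have e2 : d i = -((b - x₀) * p x₀) := by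
      simp [hd, show ¬ i = i - 1 from by omega]
    rw [e1, e2]; ring
  rw [hdsum] at hsum
  have hzero := hgmin.hasDerivAt_eq_zero hsum
  rw [sub_eq_zero] at hzero
  have hFa : (∫ s in (0:ℝ)..x₀, p s) - ∫ s in (0:ℝ)..a, p s = ∫ t in a..x₀, p t :=
    intervalIntegral.integral_interval_sub_left (hint p hpc 0 x₀) (hint p hpc 0 a)
  rw [hexti, hFa, hzero, mul_div_assoc, div_self hppos.ne', mul_one]
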